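/- Let ω₁ denote the first uncountable ordinal and let Ω = {α | α < ω₁} be the set of countable ordinals equipped with the order topology (generated by the open intervals). There is no function s : Ω → Ω that is locally constant and progressive, i.e., no locally constant s satisfying β ≤ s(β) for all β ∈ Ω. -/

import Mathlib

/-- The set of countable ordinals, i.e. ordinals below ω₁, the least
uncountable ordinal. -/
def CountableOrdinals : Type 1 := {o : Ordinal.{0} // o < (Cardinal.aleph 1).ord}

noncomputable instance : LinearOrder CountableOrdinals :=
  inferInstanceAs (LinearOrder {o : Ordinal.{0} // o < (Cardinal.aleph 1).ord})

/-- The order (interval) topology on the countable ordinals. -/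
noncomputable instance : TopologicalSpace CountableOrdinals := Preorder.topology CountableOrdinals

instance : OrderTopology CountableOrdinals := ⟨rfl⟩

/-- There is no locally constant progressive map on the space of countable
ordinals with the interval topology. -/
theorem no_locallyConstant_progressive :
    ¬ ∃ s : CountableOrdinals → CountableOrdinals,
        IsLocallyConstant s ∧ ∀ β : CountableOrdinals, β ≤ s β := by
  rintro ⟨s, hlc, hprog⟩
  have hlim : Order.IsSuccLimit ((Cardinal.aleph 1).ord) :=
    Cardinal.isSuccLimit_ord (Cardinal.aleph0_le_aleph 1)
  -- iterate: f 0 = 0, f (n+1) = s (f n) + 1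
  let f : ℕ → CountableOrdinals := fun n =>
    Nat.rec ⟨0, hlim.pos⟩ (fun _ x => ⟨Order.succ (s x).val, hlim.succ_lt (s x).2⟩) n
  have hstep : ∀ n, (s (f n)).val < (f (n + 1)).val := fun n =>
    Order.lt_succ _
  -- the supremum of the iterates
  have hb : (⨆ n, (f n).val) < (Cardinal.aleph 1).ord := by
    apply Ordinal.iSup_lt_ord _ (fun n => (f n).2)
    rw [Cardinal.isRegular_aleph_one.cof_eq, Cardinal.mk_denumerable]
    exact Cardinal.aleph0_lt_aleph_one
  set b : CountableOrdinals := ⟨⨆ n, (f n).val, hb⟩ with hbdef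
  have hle : ∀ n, (f n).val ≤ b.val := fun n => le_ciSup (Ordinal.bddAbove_range _) n
  have hfltb : ∀ n, f n < b := by
    intro n
    have h1 : (f n).val < (f (n + 1)).val := lt_of_le_of_lt (hprog (f n)) (hstep n)
    exact lt_of_lt_of_le h1 (hle (n + 1))
  -- local constancy at b gives an interval (l, b] on which s is constant
  have hnhds : s ⁻¹' {s b} ∈ nhds b := hlc.isOpen_fiber (s b) |>.mem_nhds rfl
  obtain ⟨l, hlb, hsub⟩ := exists_Ioc_subset_of_mem_nhds hnhds ⟨f 0, hfltb 0⟩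
  -- find an iterate above l
  have : l.val < ⨆ n, (f n).val := hlb
  obtain ⟨n, hn⟩ := Ordinal.lt_iSup_iff.mp this
  have hmem : f n ∈ Set.Ioc l b := ⟨hn, le_of_lt (hfltb n)⟩
  have heq : s (f n) = s b := hsub hmem
  -- but s (f n) < b ≤ s b : contradiction
  have h1 : (s (f n)).val < b.val := lt_of_lt_of_le (hstep n) (hle (n + 1))
  have h2 : b ≤ s b := hprog b
  rw [heq] at h1
  exact absurd (lt_of_lt_of_le h1 h2) (lt_irrefl _)
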